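/- For every λ ∈ ℂ with φ_q(λ) ≠ 0 and every s ∈ ℂ with s² = Δ(λ)² − 1, one has ξ(λ,s) = 2s(1 + A(λ)) − J(λ). In particular, ξ(λ,s) − 2s equals a polynomial expression in λ that does not depend on the choice of the square root s. -/

import Mathlib

open Polynomial Asymptotics Filter

theorem stmt4
    (q : ℕ) (hq : 1 ≤ q)
    (a b : ℤ → ℝ)
    (ha_per : ∀ n : ℤ, a (n + (q : ℤ)) = a n)
    (hb_per : ∀ n : ℤ, b (n + (q : ℤ)) = b n)
    (ha_pos : ∀ n : ℤ, 0 < a n)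
    (θ φ : ℤ → Polynomial ℝ)
    (hθ_rec : ∀ n : ℤ,
      C (a (n - 1)) * θ (n - 1) + C (a n) * θ (n + 1) + C (b n) * θ n = X * θ n)
    (hφ_rec : ∀ n : ℤ,
      C (a (n - 1)) * φ (n - 1) + C (a n) * φ (n + 1) + C (b n) * φ n = X * φ n)
    (hθ0 : θ 0 = 1) (hθ1 : θ 1 = 0) (hφ0 : φ 0 = 0) (hφ1 : φ 1 = 1)
    (Δl : Polynomial ℝ) (hΔl : Δl = C ((2:ℝ)⁻¹) * (φ ((q:ℤ) + 1) + θ (q:ℤ)))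
    (φh : Polynomial ℝ) (hφh : φh = C ((2:ℝ)⁻¹) * (φ ((q:ℤ) + 1) - θ (q:ℤ)))
    (p : ℕ) (hp : 1 ≤ p)
    (u v : ℤ → ℝ)
    (hu_supp : ∀ n : ℤ, (n < 0 ∨ (p:ℤ) < n) → u n = 0)
    (hv_supp : ∀ n : ℤ, (n < 0 ∨ (p:ℤ) < n) → v n = 0)
    (hv0 : v 0 ≠ 0) (hvp : v (p:ℤ) ≠ 0)
    (hat_pos : ∀ n : ℤ, 0 < a n + u n)
    (θt φt : ℤ → Polynomial ℝ)
    (hθt_rec : ∀ n : ℤ,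
      C (a (n - 1) + u (n - 1)) * θt (n - 1) + C (a n + u n) * θt (n + 1)
        + C (b n + v n) * θt n = X * θt n)
    (hφt_rec : ∀ n : ℤ,
      C (a (n - 1) + u (n - 1)) * φt (n - 1) + C (a n + u n) * φt (n + 1)
        + C (b n + v n) * φt n = X * φt n)
    (hθt_bc : ∀ n : ℤ, (p:ℤ) < n → θt n = θ n)
    (hφt_bc : ∀ n : ℤ, (p:ℤ) < n → φt n = φ n)
    (Ap : Polynomial ℝ)
    (hAp : Ap = C ((2:ℝ)⁻¹) *
      ((C ((a 0 + u 0) / a 0) * φt 1 - φ 1) + C (v 0 / a 0) * φt 0 + (θt 0 - θ 0)))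
    (Jp : Polynomial ℝ)
    (hJp : Jp = -(C ((a 0 + u 0) / a 0) * φ (q:ℤ) * θt 1
      + φh * (C ((a 0 + u 0) / a 0) * φt 1 - θt 0)
      + C (v 0 / a 0) * (φ (q:ℤ) * θt 0 + φh * φt 0)
      + θ ((q:ℤ) + 1) * φt 0))
    (lam s : ℂ) (hφq : aeval lam (φ (q:ℤ)) ≠ 0)
    (hs : s ^ 2 = (aeval lam Δl) ^ 2 - 1)
    (fp : ℤ → ℂ)
    (hfp_rec : ∀ n : ℤ,
      ((a (n - 1) + u (n - 1) : ℝ) : ℂ) * fp (n - 1)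
        + ((a n + u n : ℝ) : ℂ) * fp (n + 1)
        + ((b n + v n : ℝ) : ℂ) * fp n = lam * fp n)
    (hfp_bc : ∀ n : ℤ, (p:ℤ) < n →
      fp n = aeval lam (θ n)
        + (aeval lam φh + s) / aeval lam (φ (q:ℤ)) * aeval lam (φ n))
    (fm : ℤ → ℂ)
    (hfm_rec : ∀ n : ℤ,
      ((a (n - 1) + u (n - 1) : ℝ) : ℂ) * fm (n - 1)
        + ((a n + u n : ℝ) : ℂ) * fm (n + 1)
        + ((b n + v n : ℝ) : ℂ) * fm n = lam * fm n)
    (hfm_bc : ∀ n : ℤ, n ≤ 0 →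
      fm n = aeval lam (θ n)
        + (aeval lam φh - s) / aeval lam (φ (q:ℤ)) * aeval lam (φ n))
    :
    aeval lam (φ (q:ℤ)) / (a 0 : ℂ)
        * (((a 0 + u 0 : ℝ) : ℂ) * (fm 0 * fp 1 - fm 1 * fp 0))
      = 2 * s * (1 + aeval lam Ap) - aeval lam Jp := by
  have ha0 : ((a 0 : ℝ) : ℂ) ≠ 0 := by exact_mod_cast (ha_pos 0).ne'
  have hA0 : ((a 0 + u 0 : ℝ) : ℂ) ≠ 0 := by exact_mod_cast (hat_pos 0).ne'
  -- evaluated recurrences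
  have eθ : ∀ n : ℤ, ((a (n-1) : ℝ):ℂ) * aeval lam (θ (n-1)) + ((a n:ℝ):ℂ) * aeval lam (θ (n+1))
      + ((b n:ℝ):ℂ) * aeval lam (θ n) = lam * aeval lam (θ n) := by
    intro n
    have := congrArg (aeval lam (R := ℝ)) (hθ_rec n)
    simpa using this
  have eφ : ∀ n : ℤ, ((a (n-1) : ℝ):ℂ) * aeval lam (φ (n-1)) + ((a n:ℝ):ℂ) * aeval lam (φ (n+1))
      + ((b n:ℝ):ℂ) * aeval lam (φ n) = lam * aeval lam (φ n) := by
    intro n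
    have := congrArg (aeval lam (R := ℝ)) (hφ_rec n)
    simpa using this
  have eθt : ∀ n : ℤ, ((a (n-1) + u (n-1) : ℝ):ℂ) * aeval lam (θt (n-1))
      + ((a n + u n:ℝ):ℂ) * aeval lam (θt (n+1))
      + ((b n + v n:ℝ):ℂ) * aeval lam (θt n) = lam * aeval lam (θt n) := by
    intro n
    have := congrArg (aeval lam (R := ℝ)) (hθt_rec n)
    simpa using this
  have eφt : ∀ n : ℤ, ((a (n-1) + u (n-1) : ℝ):ℂ) * aeval lam (φt (n-1))
      + ((a n + u n:ℝ):ℂ) * aeval lam (φt (n+1))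
      + ((b n + v n:ℝ):ℂ) * aeval lam (φt n) = lam * aeval lam (φt n) := by
    intro n
    have := congrArg (aeval lam (R := ℝ)) (hφt_rec n)
    simpa using this
  -- Wronskian
  have hWpoly : ∀ k : ℕ, C (a (k:ℤ)) * (θ (k:ℤ) * φ ((k:ℤ)+1) - θ ((k:ℤ)+1) * φ (k:ℤ)) = C (a 0) := by
    intro k
    induction k with
    | zero => simp [hθ0, hθ1, hφ0, hφ1]
    | succ k ih =>
      have h1 := hθ_rec ((k:ℤ)+1)
      have h2 := hφ_rec ((k:ℤ)+1)
      rw [add_sub_cancel_right] at h1 h2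
      push_cast
      linear_combination ih + θ ((k:ℤ)+1) * h2 - φ ((k:ℤ)+1) * h1
  have haq : a (q:ℤ) = a 0 := by simpa using ha_per 0
  have hWq : θ (q:ℤ) * φ ((q:ℤ)+1) - θ ((q:ℤ)+1) * φ (q:ℤ) = 1 := by
    have h := hWpoly q
    rw [haq] at h
    have hC : (C (a 0) : Polynomial ℝ) ≠ 0 := by
      simpa using (ha_pos 0).ne'
    exact mul_left_cancel₀ hC (by rw [h, mul_one])
  have hWl : aeval lam (θ (q:ℤ)) * aeval lam (φ ((q:ℤ)+1))
      - aeval lam (θ ((q:ℤ)+1)) * aeval lam (φ (q:ℤ)) = 1 := by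
    have := congrArg (aeval lam (R := ℝ)) hWq
    simpa using this
  obtain ⟨mp, hmpd⟩ : ∃ x : ℂ, x = (aeval lam φh + s) / aeval lam (φ (q:ℤ)) := ⟨_, rfl⟩
  obtain ⟨mm, hmmd⟩ : ∃ x : ℂ, x = (aeval lam φh - s) / aeval lam (φ (q:ℤ)) := ⟨_, rfl⟩
  -- fp identity
  have hkeyB : ∀ k : ℕ, ∀ m : ℤ, (p:ℤ) - k < m →
      fp m = aeval lam (θt m) + mp * aeval lam (φt m) := by
    intro k
    induction k with
    | zero =>
      intro m hm
      have hm' : (p:ℤ) < m := by push_cast at hm; omega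
      rw [hfp_bc m hm', hθt_bc m hm', hφt_bc m hm', ← hmpd]
    | succ k ih =>
      intro m hm
      rcases lt_or_ge ((p:ℤ) - k) m with h | h
      · exact ih m h
      · have hm' : m = (p:ℤ) - k := by push_cast at hm; omega
        subst hm'
        have h1 := hfp_rec ((p:ℤ) - k + 1)
        have h2 := eθt ((p:ℤ) - k + 1)
        have h3 := eφt ((p:ℤ) - k + 1)
        rw [add_sub_cancel_right] at h1 h2 h3
        have e1 := ih ((p:ℤ) - k + 1) (by omega)
        have e2 := ih ((p:ℤ) - k + 1 + 1) (by omega)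
        have hc : ((a ((p:ℤ)-k) + u ((p:ℤ)-k) : ℝ):ℂ) ≠ 0 := by
          exact_mod_cast (hat_pos _).ne'
        apply mul_left_cancel₀ hc
        linear_combination h1 - h2 - mp * h3
          + (lam - ((b ((p:ℤ)-k+1) + v ((p:ℤ)-k+1) : ℝ):ℂ)) * e1
          - ((a ((p:ℤ)-k+1) + u ((p:ℤ)-k+1) : ℝ):ℂ) * e2
  have hfp0 : fp 0 = aeval lam (θt 0) + mp * aeval lam (φt 0) :=
    hkeyB (p+1) 0 (by push_cast; omega)
  have hfp1 : fp 1 = aeval lam (θt 1) + mp * aeval lam (φt 1) :=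
    hkeyB (p+1) 1 (by push_cast; omega)
  -- fm values
  have hfm0 : fm 0 = 1 := by
    have := hfm_bc 0 le_rfl
    rw [← hmmd] at this
    simpa [hθ0, hφ0] using this
  have hfmm : fm (-1) = aeval lam (θ (-1)) + mm * aeval lam (φ (-1)) := by rw [hfm_bc (-1) (by norm_num), ← hmmd]
  have hfm1A : ((a 0 + u 0:ℝ):ℂ) * fm 1 = -((v 0:ℝ):ℂ) + mm * ((a 0:ℝ):ℂ) := by
    have h1 := hfm_rec 0
    have h2 := eθ 0
    have h3 := eφ 0
    simp only [zero_sub, zero_add] at h1 h2 h3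
    rw [hfm0, hfmm] at h1
    simp only [hθ0, hθ1, hφ0, hφ1, map_one, map_zero] at h2 h3
    have hu1 : ((u (-1) : ℝ):ℂ) = 0 := by
      rw [hu_supp (-1) (Or.inl (by norm_num))]; norm_num
    push_cast at h1 h2 h3 ⊢
    linear_combination h1 - h2 - mm * h3
      - (aeval lam (θ (-1)) + mm * aeval lam (φ (-1))) * hu1
  -- spectral relation
  have hD : aeval lam Δl = ((2:ℂ))⁻¹ * (aeval lam (φ ((q:ℤ)+1)) + aeval lam (θ (q:ℤ))) := by
    rw [hΔl]; push_cast [map_mul, map_add, aeval_C]; norm_num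
  have hFhE : aeval lam φh = ((2:ℂ))⁻¹ * (aeval lam (φ ((q:ℤ)+1)) - aeval lam (θ (q:ℤ))) := by
    rw [hφh]; push_cast [map_mul, map_sub, aeval_C]; norm_num
  have hMM : (aeval lam φh + s) * (aeval lam φh - s)
      = -(aeval lam (θ ((q:ℤ)+1))) * aeval lam (φ (q:ℤ)) := by
    have hs2 : s^2 = ((2:ℂ)⁻¹ * (aeval lam (φ ((q:ℤ)+1)) + aeval lam (θ (q:ℤ))))^2 - 1 := by
      rw [hs, hD]
    linear_combination (aeval lam φh + (2:ℂ)⁻¹ * (aeval lam (φ ((q:ℤ)+1)) - aeval lam (θ (q:ℤ)))) * hFhE - hs2 - hWl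
  have hMPF : mp * aeval lam (φ (q:ℤ)) = aeval lam φh + s := by
    rw [hmpd]; field_simp
  have hMMF : mm * aeval lam (φ (q:ℤ)) = aeval lam φh - s := by
    rw [hmmd]; field_simp
  have hPROD : mp * mm * aeval lam (φ (q:ℤ)) = -(aeval lam (θ ((q:ℤ)+1))) := by
    apply mul_right_cancel₀ hφq
    linear_combination (mm * aeval lam (φ (q:ℤ))) * hMPF + (aeval lam φh + s) * hMMF + hMM
  -- final computation
  have hfm1A' : (((a 0:ℝ):ℂ) + ((u 0:ℝ):ℂ)) * fm 1 = -((v 0:ℝ):ℂ) + mm * ((a 0:ℝ):ℂ) := by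
    push_cast at hfm1A; exact hfm1A
  have hApE : aeval lam Ap = (2:ℂ)⁻¹ * (((((a 0:ℝ):ℂ) + ((u 0:ℝ):ℂ))/((a 0:ℝ):ℂ)) * aeval lam (φt 1) - 1
      + (((v 0:ℝ):ℂ)/((a 0:ℝ):ℂ)) * aeval lam (φt 0) + (aeval lam (θt 0) - 1)) := by
    rw [hAp]
    simp only [map_mul, map_add, map_sub, aeval_C, hθ0, hφ1, map_one, Complex.coe_algebraMap]
    push_cast
    ring
  have hJpE : aeval lam Jp = -(((((a 0:ℝ):ℂ)+((u 0:ℝ):ℂ))/((a 0:ℝ):ℂ)) * aeval lam (φ (q:ℤ)) * aeval lam (θt 1)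
      + aeval lam φh * (((((a 0:ℝ):ℂ)+((u 0:ℝ):ℂ))/((a 0:ℝ):ℂ)) * aeval lam (φt 1) - aeval lam (θt 0))
      + (((v 0:ℝ):ℂ)/((a 0:ℝ):ℂ)) * (aeval lam (φ (q:ℤ)) * aeval lam (θt 0) + aeval lam φh * aeval lam (φt 0))
      + aeval lam (θ ((q:ℤ)+1)) * aeval lam (φt 0)) := by
    rw [hJp]
    simp only [map_mul, map_add, map_sub, map_neg, aeval_C, Complex.coe_algebraMap]
    push_cast
    ring
  have main : aeval lam (φ (q:ℤ)) * ((((a 0:ℝ):ℂ)+((u 0:ℝ):ℂ)) * (aeval lam (θt 1) + mp * aeval lam (φt 1))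
        - (-((v 0:ℝ):ℂ) + mm * ((a 0:ℝ):ℂ)) * (aeval lam (θt 0) + mp * aeval lam (φt 0)))
      = 2*s*((a 0:ℝ):ℂ)
        + s*((((a 0:ℝ):ℂ)+((u 0:ℝ):ℂ)) * aeval lam (φt 1) - ((a 0:ℝ):ℂ) + ((v 0:ℝ):ℂ) * aeval lam (φt 0)
            + ((a 0:ℝ):ℂ) * aeval lam (θt 0) - ((a 0:ℝ):ℂ))
        + (((a 0:ℝ):ℂ)+((u 0:ℝ):ℂ)) * aeval lam (φ (q:ℤ)) * aeval lam (θt 1)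
        + aeval lam φh * ((((a 0:ℝ):ℂ)+((u 0:ℝ):ℂ)) * aeval lam (φt 1) - ((a 0:ℝ):ℂ) * aeval lam (θt 0))
        + ((v 0:ℝ):ℂ) * (aeval lam (φ (q:ℤ)) * aeval lam (θt 0) + aeval lam φh * aeval lam (φt 0))
        + ((a 0:ℝ):ℂ) * aeval lam (θ ((q:ℤ)+1)) * aeval lam (φt 0) := by
    linear_combination ((((a 0:ℝ):ℂ)+((u 0:ℝ):ℂ)) * aeval lam (φt 1) + ((v 0:ℝ):ℂ) * aeval lam (φt 0)) * hMPF
      - (((a 0:ℝ):ℂ) * aeval lam (θt 0)) * hMMF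
      - (((a 0:ℝ):ℂ) * aeval lam (φt 0)) * hPROD
  rw [hfm0, hfp0, hfp1, hApE, hJpE]
  push_cast
  field_simp
  linear_combination main
    - (aeval lam (φ (q:ℤ)) * (aeval lam (θt 0) + mp * aeval lam (φt 0))) * hfm1A'
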